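/- Let β ∈ SVB_n have exactly d singularities and degree s. Then η̂(β) in ℤ[VB_n] can be written as a sum Σ_{i=1}^{2^d} a_i α_i with a_i ∈ ℤ and α_i ∈ VB_n, such that there are unique indices k, l with deg(α_k) = s − d and deg(α_l) = s + d, and for every other index i one has s − d < deg(α_i) < s + d. -/

import Mathlib

namespace SVBPaper

/-- Generators of the singular virtual braid monoid: `s i` is `σ_i`, `si i` is `σ_i⁻¹`,
`r i` is `ρ_i`, `t i` is `τ_i`, for `1 ≤ i ≤ n-1` (encoded as `i : Fin (n-1)`). -/
inductive SVBGen (n : ℕ) : Type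
  | s  : Fin (n - 1) → SVBGen n
  | si : Fin (n - 1) → SVBGen n
  | r  : Fin (n - 1) → SVBGen n
  | t  : Fin (n - 1) → SVBGen n

/-- The index of a generator. -/
def SVBGen.idx {n : ℕ} : SVBGen n → Fin (n - 1)
  | s i => i
  | si i => i
  | r i => i
  | t i => i

/-- `|i - j| ≥ 2`. -/
def Far {n : ℕ} (i j : Fin (n - 1)) : Prop := (i : ℕ) + 2 ≤ j ∨ (j : ℕ) + 2 ≤ i

/-- The defining relations of the singular virtual braid monoid `SVB_n`. -/
inductive SVBRel (n : ℕ) : FreeMonoid (SVBGen n) → FreeMonoid (SVBGen n) → Prop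
  | comm (x y : SVBGen n) (h : Far x.idx y.idx) :
      SVBRel n (.of x * .of y) (.of y * .of x)
  | inv_right (i : Fin (n - 1)) : SVBRel n (.of (.s i) * .of (.si i)) 1
  | inv_left (i : Fin (n - 1)) : SVBRel n (.of (.si i) * .of (.s i)) 1
  | rho_sq (i : Fin (n - 1)) : SVBRel n (.of (.r i) * .of (.r i)) 1
  | braid_s (i : Fin (n - 1)) (h : (i : ℕ) + 1 < n - 1) :
      SVBRel n (.of (.s i) * .of (.s ⟨i + 1, h⟩) * .of (.s i))
        (.of (.s ⟨i + 1, h⟩) * .of (.s i) * .of (.s ⟨i + 1, h⟩))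
  | braid_r (i : Fin (n - 1)) (h : (i : ℕ) + 1 < n - 1) :
      SVBRel n (.of (.r i) * .of (.r ⟨i + 1, h⟩) * .of (.r i))
        (.of (.r ⟨i + 1, h⟩) * .of (.r i) * .of (.r ⟨i + 1, h⟩))
  | mixed_rs (i : Fin (n - 1)) (h : (i : ℕ) + 1 < n - 1) :
      SVBRel n (.of (.r i) * .of (.s ⟨i + 1, h⟩) * .of (.r i))
        (.of (.r ⟨i + 1, h⟩) * .of (.s i) * .of (.r ⟨i + 1, h⟩))
  | mixed_rt (i : Fin (n - 1)) (h : (i : ℕ) + 1 < n - 1) :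
      SVBRel n (.of (.r i) * .of (.t ⟨i + 1, h⟩) * .of (.r i))
        (.of (.r ⟨i + 1, h⟩) * .of (.t i) * .of (.r ⟨i + 1, h⟩))
  | ts (i : Fin (n - 1)) : SVBRel n (.of (.t i) * .of (.s i)) (.of (.s i) * .of (.t i))
  | sst (i : Fin (n - 1)) (h : (i : ℕ) + 1 < n - 1) :
      SVBRel n (.of (.s i) * .of (.s ⟨i + 1, h⟩) * .of (.t i))
        (.of (.t ⟨i + 1, h⟩) * .of (.s i) * .of (.s ⟨i + 1, h⟩))

/-- The singular virtual braid monoid on `n` strands. -/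
abbrev SVB (n : ℕ) : Type := PresentedMonoid (SVBRel n)

/-- `σ_i` in `SVB_n`. -/
def sσ {n : ℕ} (i : Fin (n - 1)) : SVB n := PresentedMonoid.of (SVBRel n) (.s i)
/-- `σ_i⁻¹` in `SVB_n`. -/
def sσi {n : ℕ} (i : Fin (n - 1)) : SVB n := PresentedMonoid.of (SVBRel n) (.si i)
/-- `ρ_i` in `SVB_n`. -/
def sρ {n : ℕ} (i : Fin (n - 1)) : SVB n := PresentedMonoid.of (SVBRel n) (.r i)
/-- `τ_i` in `SVB_n`. -/
def sτ {n : ℕ} (i : Fin (n - 1)) : SVB n := PresentedMonoid.of (SVBRel n) (.t i)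

/-- The `i`-th strand, as an element of `Fin n`. -/
def stA {n : ℕ} (i : Fin (n - 1)) : Fin n := ⟨i, by have := i.isLt; omega⟩
/-- The `(i+1)`-st strand, as an element of `Fin n`. -/
def stB {n : ℕ} (i : Fin (n - 1)) : Fin n := ⟨(i : ℕ) + 1, by have := i.isLt; omega⟩

/-- The transposition `(i, i+1)` in the symmetric group `S_n`. -/
def swapAdj {n : ℕ} (i : Fin (n - 1)) : Equiv.Perm (Fin n) := Equiv.swap (stA i) (stB i)


/-- Generators of the virtual braid group: `s i` is `σ_i`, `r i` is `ρ_i`. -/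
inductive VBGen (n : ℕ) : Type
  | s : Fin (n - 1) → VBGen n
  | r : Fin (n - 1) → VBGen n

def VBGen.idx {n : ℕ} : VBGen n → Fin (n - 1)
  | s i => i
  | r i => i

/-- The relators of the virtual braid group `VB_n`. -/
inductive VBRel (n : ℕ) : FreeGroup (VBGen n) → Prop
  | comm (x y : VBGen n) (h : Far x.idx y.idx) :
      VBRel n (.of x * .of y * (FreeGroup.of x)⁻¹ * (FreeGroup.of y)⁻¹)
  | rho_sq (i : Fin (n - 1)) : VBRel n (.of (.r i) * .of (.r i))
  | braid_s (i : Fin (n - 1)) (h : (i : ℕ) + 1 < n - 1) :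
      VBRel n (.of (.s i) * .of (.s ⟨i + 1, h⟩) * .of (.s i) *
        (FreeGroup.of (.s ⟨i + 1, h⟩) * FreeGroup.of (.s i) * FreeGroup.of (.s ⟨i + 1, h⟩))⁻¹)
  | braid_r (i : Fin (n - 1)) (h : (i : ℕ) + 1 < n - 1) :
      VBRel n (.of (.r i) * .of (.r ⟨i + 1, h⟩) * .of (.r i) *
        (FreeGroup.of (.r ⟨i + 1, h⟩) * FreeGroup.of (.r i) * FreeGroup.of (.r ⟨i + 1, h⟩))⁻¹)
  | mixed_rs (i : Fin (n - 1)) (h : (i : ℕ) + 1 < n - 1) :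
      VBRel n (.of (.r i) * .of (.s ⟨i + 1, h⟩) * .of (.r i) *
        (FreeGroup.of (.r ⟨i + 1, h⟩) * FreeGroup.of (.s i) * FreeGroup.of (.r ⟨i + 1, h⟩))⁻¹)

/-- The virtual braid group on `n` strands. -/
abbrev VB (n : ℕ) : Type := PresentedGroup {w | VBRel n w}

/-- `σ_i` in `VB_n`. -/
def vσ {n : ℕ} (i : Fin (n - 1)) : VB n := PresentedGroup.of (.s i)
/-- `ρ_i` in `VB_n`. -/
def vρ {n : ℕ} (i : Fin (n - 1)) : VB n := PresentedGroup.of (.r i)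



section Aux

variable {n : ℕ}

/-- The sign attached to a choice `ε` of resolutions. -/
def sgn {m : ℕ} (ε : Fin m → Bool) : ℤ := ∏ j, (if ε j then 1 else -1)

/-- The degree shift attached to a choice `ε` of resolutions. -/
def wgt {m : ℕ} (ε : Fin m → Bool) : ℤ := ∑ j, (if ε j then 1 else -1)

lemma wgt_false {m : ℕ} : wgt (fun _ : Fin m => false) = -(m : ℤ) := by
  simp [wgt]

lemma wgt_true {m : ℕ} : wgt (fun _ : Fin m => true) = (m : ℤ) := by
  simp [wgt]

lemma neg_lt_wgt {m : ℕ} {ε : Fin m → Bool} {j : Fin m} (h : ε j = true) :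
    -(m : ℤ) < wgt ε := by
  have : ∑ _i : Fin m, (-1 : ℤ) < wgt ε := by
    refine Finset.sum_lt_sum (fun i _ => ?_) ⟨j, Finset.mem_univ j, ?_⟩
    · split <;> omega
    · simp [h]
  simpa using this

lemma wgt_lt {m : ℕ} {ε : Fin m → Bool} {j : Fin m} (h : ε j = false) :
    wgt ε < (m : ℤ) := by
  have : wgt ε < ∑ _i : Fin m, (1 : ℤ) := by
    refine Finset.sum_lt_sum (fun i _ => ?_) ⟨j, Finset.mem_univ j, ?_⟩
    · split <;> omega
    · simp [h]
  simpa using this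

/-- Count of `τ`-generators, as a monoid hom on the free monoid. -/
def cntH (n : ℕ) : FreeMonoid (SVBGen n) →* Multiplicative ℕ :=
  FreeMonoid.lift fun g => Multiplicative.ofAdd (match g with | .t _ => 1 | _ => 0)

/-- Degree, as a monoid hom on the free monoid. -/
def dgrH (n : ℕ) : FreeMonoid (SVBGen n) →* Multiplicative ℤ :=
  FreeMonoid.lift fun g =>
    Multiplicative.ofAdd (match g with | .s _ => 1 | .si _ => -1 | _ => 0)

lemma intCancel {c t : ℤ} {x : Multiplicative ℤ}
    (h : Multiplicative.ofAdd c * x = Multiplicative.ofAdd t) :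
    x = Multiplicative.ofAdd (t - c) := by
  have h2 := congrArg Multiplicative.toAdd h
  rw [toAdd_mul, toAdd_ofAdd, toAdd_ofAdd] at h2
  rw [← ofAdd_toAdd x]
  congr 1
  omega

lemma natCancel0 {t : ℕ} {x : Multiplicative ℕ}
    (h : Multiplicative.ofAdd 0 * x = Multiplicative.ofAdd t) :
    x = Multiplicative.ofAdd t := by
  rwa [ofAdd_zero, one_mul] at h

lemma natCancel1 {t : ℕ} {x : Multiplicative ℕ}
    (h : Multiplicative.ofAdd 1 * x = Multiplicative.ofAdd t) :
    ∃ t₀, t = t₀ + 1 ∧ x = Multiplicative.ofAdd t₀ := by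
  have h2 := congrArg Multiplicative.toAdd h
  rw [toAdd_mul, toAdd_ofAdd, toAdd_ofAdd] at h2
  refine ⟨Multiplicative.toAdd x, by omega, (ofAdd_toAdd x).symm⟩

lemma sum_mul_of {n : ℕ} (x : VB n) {m : ℕ} (c : (Fin m → Bool) → ℤ)
    (α' : (Fin m → Bool) → VB n) :
    MonoidAlgebra.of ℤ (VB n) x * ∑ ε, c ε • MonoidAlgebra.of ℤ (VB n) (α' ε)
      = ∑ ε, c ε • MonoidAlgebra.of ℤ (VB n) (x * α' ε) := by
  rw [Finset.mul_sum]
  exact Finset.sum_congr rfl fun ε _ => by rw [mul_smul_comm, ← map_mul]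

lemma split_sum {n m : ℕ} (x y : VB n) (α' : (Fin m → Bool) → VB n) :
    ∑ ε : Fin (m + 1) → Bool, sgn ε • MonoidAlgebra.of ℤ (VB n)
        ((if ε 0 then x else y) * α' (Fin.tail ε))
      = (MonoidAlgebra.of ℤ (VB n) x - MonoidAlgebra.of ℤ (VB n) y)
        * ∑ ε, sgn ε • MonoidAlgebra.of ℤ (VB n) (α' ε) := by
  rw [← Equiv.sum_comp (Fin.consEquiv (fun _ : Fin (m + 1) => Bool))
    (fun ε => sgn ε • MonoidAlgebra.of ℤ (VB n)
      ((if ε 0 then x else y) * α' (Fin.tail ε)))]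
  rw [Fintype.sum_prod_type, Fintype.sum_bool]
  have hc : ∀ (b : Bool) (ε' : Fin m → Bool),
      (Fin.consEquiv (fun _ : Fin (m + 1) => Bool)) (b, ε') = Fin.cons b ε' := fun _ _ => rfl
  have hsgn : ∀ (b : Bool) (ε' : Fin m → Bool),
      sgn (Fin.cons b ε') = (if b then 1 else -1) * sgn ε' := fun b ε' => by
    simp [sgn, Fin.prod_univ_succ]
  rw [sub_mul, sum_mul_of, sum_mul_of, sub_eq_add_neg, ← Finset.sum_neg_distrib]
  congr 1
  · refine Finset.sum_congr rfl fun ε' _ => ?_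
    rw [hc, hsgn, Fin.cons_zero, Fin.tail_cons, if_pos rfl, if_pos rfl, one_mul]
  · refine Finset.sum_congr rfl fun ε' _ => ?_
    rw [hc, hsgn, Fin.cons_zero, Fin.tail_cons, if_neg (by simp), if_neg (by simp),
      neg_one_mul, neg_smul]

lemma key (n : ℕ)
    (η : SVB n →* MonoidAlgebra ℤ (VB n))
    (hη : ∀ i : Fin (n - 1),
      η (sσ i) = MonoidAlgebra.of ℤ (VB n) (vσ i) ∧
      η (sσi i) = MonoidAlgebra.of ℤ (VB n) ((vσ i)⁻¹) ∧
      η (sρ i) = MonoidAlgebra.of ℤ (VB n) (vρ i) ∧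
      η (sτ i) = MonoidAlgebra.of ℤ (VB n) (vσ i) - MonoidAlgebra.of ℤ (VB n) ((vσ i)⁻¹))
    (degV : VB n →* Multiplicative ℤ)
    (hdegV : ∀ i : Fin (n - 1),
      degV (vσ i) = Multiplicative.ofAdd 1 ∧ degV (vρ i) = Multiplicative.ofAdd 0)
    (w : FreeMonoid (SVBGen n)) :
    ∀ (m : ℕ) (t : ℤ), cntH n w = Multiplicative.ofAdd m →
      dgrH n w = Multiplicative.ofAdd t →
      ∃ α : (Fin m → Bool) → VB n,
        η (PresentedMonoid.mk (SVBRel n) w)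
            = ∑ ε, sgn ε • MonoidAlgebra.of ℤ (VB n) (α ε) ∧
        ∀ ε, degV (α ε) = Multiplicative.ofAdd (t + wgt ε) := by
  induction w using FreeMonoid.inductionOn' with
  | one =>
    intro m t hm ht
    have hm0 : m = 0 := by
      have := congrArg Multiplicative.toAdd hm; simpa using this.symm
    have ht0 : t = 0 := by
      have := congrArg Multiplicative.toAdd ht; simpa using this.symm
    subst hm0 ht0
    refine ⟨fun _ => 1, ?_, fun ε => ?_⟩
    · simp [sgn, map_one]
    · simp [wgt, map_one]
  | of_mul g w' ih =>
    intro m t hm ht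
    rw [map_mul] at hm ht
    have hmk : η (PresentedMonoid.mk (SVBRel n) (FreeMonoid.of g * w'))
        = η (PresentedMonoid.mk (SVBRel n) (FreeMonoid.of g))
          * η (PresentedMonoid.mk (SVBRel n) w') := by rw [map_mul, map_mul]
    cases g with
    | s i =>
      rw [show cntH n (FreeMonoid.of (SVBGen.s i)) = Multiplicative.ofAdd 0 from rfl] at hm
      rw [show dgrH n (FreeMonoid.of (SVBGen.s i)) = Multiplicative.ofAdd 1 from rfl] at ht
      obtain ⟨α', hsum, hdg⟩ := ih m (t - 1) (natCancel0 hm) (intCancel ht)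
      refine ⟨fun ε => vσ i * α' ε, ?_, fun ε => ?_⟩
      · rw [hmk]
        have h1 : η (PresentedMonoid.mk (SVBRel n) (FreeMonoid.of (SVBGen.s i)))
            = MonoidAlgebra.of ℤ (VB n) (vσ i) := (hη i).1
        rw [h1, hsum, sum_mul_of]
      · rw [map_mul, (hdegV i).1, hdg ε, ← ofAdd_add]
        congr 1; ring
    | si i =>
      rw [show cntH n (FreeMonoid.of (SVBGen.si i)) = Multiplicative.ofAdd 0 from rfl] at hm
      rw [show dgrH n (FreeMonoid.of (SVBGen.si i)) = Multiplicative.ofAdd (-1) from rfl] at ht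
      obtain ⟨α', hsum, hdg⟩ := ih m (t + 1) (natCancel0 hm) (by
        have := intCancel ht; rwa [show t - (-1) = t + 1 by ring] at this)
      refine ⟨fun ε => (vσ i)⁻¹ * α' ε, ?_, fun ε => ?_⟩
      · rw [hmk]
        have h1 : η (PresentedMonoid.mk (SVBRel n) (FreeMonoid.of (SVBGen.si i)))
            = MonoidAlgebra.of ℤ (VB n) ((vσ i)⁻¹) := (hη i).2.1
        rw [h1, hsum, sum_mul_of]
      · rw [map_mul, map_inv, (hdegV i).1, hdg ε, ← ofAdd_neg, ← ofAdd_add]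
        congr 1; ring
    | r i =>
      rw [show cntH n (FreeMonoid.of (SVBGen.r i)) = Multiplicative.ofAdd 0 from rfl] at hm
      rw [show dgrH n (FreeMonoid.of (SVBGen.r i)) = Multiplicative.ofAdd 0 from rfl] at ht
      obtain ⟨α', hsum, hdg⟩ := ih m t (natCancel0 hm) (by
        have := intCancel ht; rwa [show t - 0 = t by ring] at this)
      refine ⟨fun ε => vρ i * α' ε, ?_, fun ε => ?_⟩
      · rw [hmk]
        have h1 : η (PresentedMonoid.mk (SVBRel n) (FreeMonoid.of (SVBGen.r i)))
            = MonoidAlgebra.of ℤ (VB n) (vρ i) := (hη i).2.2.1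
        rw [h1, hsum, sum_mul_of]
      · rw [map_mul, (hdegV i).2, hdg ε, ← ofAdd_add]
        congr 1; ring
    | t i =>
      rw [show cntH n (FreeMonoid.of (SVBGen.t i)) = Multiplicative.ofAdd 1 from rfl] at hm
      rw [show dgrH n (FreeMonoid.of (SVBGen.t i)) = Multiplicative.ofAdd 0 from rfl] at ht
      obtain ⟨m₀, rfl, hm'⟩ := natCancel1 hm
      obtain ⟨α', hsum, hdg⟩ := ih m₀ t hm' (by
        have := intCancel ht; rwa [show t - 0 = t by ring] at this)
      refine ⟨fun ε => (if ε 0 then vσ i else (vσ i)⁻¹) * α' (Fin.tail ε), ?_, fun ε => ?_⟩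
      · rw [hmk]
        have hτ : η (PresentedMonoid.mk (SVBRel n) (FreeMonoid.of (SVBGen.t i)))
            = MonoidAlgebra.of ℤ (VB n) (vσ i)
              - MonoidAlgebra.of ℤ (VB n) ((vσ i)⁻¹) := (hη i).2.2.2
        rw [hτ, hsum]
        exact (split_sum (vσ i) ((vσ i)⁻¹) α').symm
      · have hw : wgt ε = (if ε 0 then 1 else -1) + wgt (Fin.tail ε) := by
          simp [wgt, Fin.sum_univ_succ, Fin.tail]; rfl
        have hδ : degV (if ε 0 then vσ i else (vσ i)⁻¹)
            = Multiplicative.ofAdd (if ε 0 then (1 : ℤ) else -1) := by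
          by_cases h0 : ε 0 = true
          · rw [if_pos h0, if_pos h0]; exact (hdegV i).1
          · rw [if_neg h0, if_neg h0, map_inv, (hdegV i).1, ← ofAdd_neg]
        rw [map_mul, hδ, hdg (Fin.tail ε), hw, ← ofAdd_add]
        congr 1
        ring

end Aux

/-- If `β ∈ SVB_n` has exactly `d` singularities and degree `s`, then
`η̂(β) = Σ_{i=1}^{2^d} a_i α_i` with `a_i ∈ ℤ`, `α_i ∈ VB_n`, there are unique indices `k, l`
with `deg(α_k) = s - d` and `deg(α_l) = s + d`, and every other term has degree strictly
between `s - d` and `s + d`. -/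
theorem etaHat_degree_decomposition (n : ℕ) (hn : 2 ≤ n)
    (η : SVB n →* MonoidAlgebra ℤ (VB n))
    (hη : ∀ i : Fin (n - 1),
      η (sσ i) = MonoidAlgebra.of ℤ (VB n) (vσ i) ∧
      η (sσi i) = MonoidAlgebra.of ℤ (VB n) ((vσ i)⁻¹) ∧
      η (sρ i) = MonoidAlgebra.of ℤ (VB n) (vρ i) ∧
      η (sτ i) = MonoidAlgebra.of ℤ (VB n) (vσ i) - MonoidAlgebra.of ℤ (VB n) ((vσ i)⁻¹))
    (sing : SVB n →* Multiplicative ℕ)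
    (hsing : ∀ i : Fin (n - 1),
      sing (sτ i) = Multiplicative.ofAdd 1 ∧ sing (sσ i) = Multiplicative.ofAdd 0 ∧
        sing (sσi i) = Multiplicative.ofAdd 0 ∧ sing (sρ i) = Multiplicative.ofAdd 0)
    (deg : SVB n →* Multiplicative ℤ)
    (hdeg : ∀ i : Fin (n - 1),
      deg (sσ i) = Multiplicative.ofAdd 1 ∧ deg (sσi i) = Multiplicative.ofAdd (-1) ∧
        deg (sρ i) = Multiplicative.ofAdd 0 ∧ deg (sτ i) = Multiplicative.ofAdd 0)
    (degV : VB n →* Multiplicative ℤ)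
    (hdegV : ∀ i : Fin (n - 1),
      degV (vσ i) = Multiplicative.ofAdd 1 ∧ degV (vρ i) = Multiplicative.ofAdd 0)
    (β : SVB n) (d : ℕ) (s : ℤ)
    (hd : sing β = Multiplicative.ofAdd d) (hs : deg β = Multiplicative.ofAdd s) :
    ∃ (a : Fin (2 ^ d) → ℤ) (α : Fin (2 ^ d) → VB n) (k l : Fin (2 ^ d)),
      η β = ∑ i, a i • MonoidAlgebra.of ℤ (VB n) (α i) ∧
      degV (α k) = Multiplicative.ofAdd (s - d) ∧
      (∀ i, degV (α i) = Multiplicative.ofAdd (s - d) → i = k) ∧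
      degV (α l) = Multiplicative.ofAdd (s + d) ∧
      (∀ i, degV (α i) = Multiplicative.ofAdd (s + d) → i = l) ∧
      ∀ i, i ≠ k → i ≠ l →
        s - d < Multiplicative.toAdd (degV (α i)) ∧
          Multiplicative.toAdd (degV (α i)) < s + d := by
  obtain ⟨w, rfl⟩ := PresentedMonoid.surjective_mk (rels := SVBRel n) β
  have hcnt : sing.comp (PresentedMonoid.mk (SVBRel n)) = cntH n := by
    apply FreeMonoid.hom_eq
    intro g
    cases g with
    | s i => exact (hsing i).2.1
    | si i => exact (hsing i).2.2.1
    | r i => exact (hsing i).2.2.2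
    | t i => exact (hsing i).1
  have hdgr : deg.comp (PresentedMonoid.mk (SVBRel n)) = dgrH n := by
    apply FreeMonoid.hom_eq
    intro g
    cases g with
    | s i => exact (hdeg i).1
    | si i => exact (hdeg i).2.1
    | r i => exact (hdeg i).2.2.1
    | t i => exact (hdeg i).2.2.2
  have hd' : cntH n w = Multiplicative.ofAdd d := by
    rw [← hcnt]; exact hd
  have hs' : dgrH n w = Multiplicative.ofAdd s := by
    rw [← hdgr]; exact hs
  obtain ⟨α, hsum, hdg⟩ := key n η hη degV hdegV w d s hd' hs'
  set E : (Fin d → Bool) ≃ Fin (2 ^ d) :=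
    (Equiv.arrowCongr (Equiv.refl (Fin d)) finTwoEquiv.symm).trans finFunctionFinEquiv with hE
  have toAddDeg : ∀ ε, Multiplicative.toAdd (degV (α ε)) = s + wgt ε := by
    intro ε; rw [hdg ε, toAdd_ofAdd]
  have all_true : ∀ ε : Fin d → Bool, ε ≠ (fun _ => true) → wgt ε < (d : ℤ) := by
    intro ε hne
    obtain ⟨j, hj⟩ : ∃ j, ε j = false := by
      by_contra hno
      push_neg at hno
      exact hne (funext fun j => by
        have := hno j
        cases h : ε j
        · exact absurd h this
        · rfl)
    exact wgt_lt hj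
  have all_false : ∀ ε : Fin d → Bool, ε ≠ (fun _ => false) → -(d : ℤ) < wgt ε := by
    intro ε hne
    obtain ⟨j, hj⟩ : ∃ j, ε j = true := by
      by_contra hno
      push_neg at hno
      exact hne (funext fun j => by
        have := hno j
        cases h : ε j
        · rfl
        · exact absurd h this)
    exact neg_lt_wgt hj
  refine ⟨fun i => sgn (E.symm i), fun i => α (E.symm i), E (fun _ => false),
    E (fun _ => true), ?_, ?_, ?_, ?_, ?_, ?_⟩
  · rw [hsum, ← Equiv.sum_comp E.symm (fun ε => sgn ε • MonoidAlgebra.of ℤ (VB n) (α ε))]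
  · simp only [Equiv.symm_apply_apply]
    rw [hdg, wgt_false, sub_eq_add_neg]
  · intro i hi
    have h1 : s + wgt (E.symm i) = s - (d : ℤ) := by
      have h2 := (hdg (E.symm i)).symm.trans hi
      simpa using congrArg Multiplicative.toAdd h2
    have h4 : E.symm i = (fun _ => false) := by
      by_contra hne
      have := all_false _ hne
      omega
    rw [← h4, Equiv.apply_symm_apply]
  · simp only [Equiv.symm_apply_apply]
    rw [hdg, wgt_true]
  · intro i hi
    have h1 : s + wgt (E.symm i) = s + (d : ℤ) := by
      have h2 := (hdg (E.symm i)).symm.trans hi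
      simpa using congrArg Multiplicative.toAdd h2
    have h4 : E.symm i = (fun _ => true) := by
      by_contra hne
      have := all_true _ hne
      omega
    rw [← h4, Equiv.apply_symm_apply]
  · intro i hik hil
    have hne1 : E.symm i ≠ (fun _ => false) := by
      intro h
      apply hik
      rw [← h, Equiv.apply_symm_apply]
    have hne2 : E.symm i ≠ (fun _ => true) := by
      intro h
      apply hil
      rw [← h, Equiv.apply_symm_apply]
    have l1 := all_false _ hne1
    have l2 := all_true _ hne2
    rw [toAddDeg]
    omega

end SVBPaper
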